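/- Let M be the complex vector space of n×n complex matrices, C ⊆ M the set of conjugate-normal matrices (A with A·A* = conj(A*·A), where conj is entrywise complex conjugation), and S the subspace of symmetric matrices (Aᵀ = A). If X is a linear subspace of M with S ⊆ X ⊆ C, then X = S. -/
import Mathlib


open scoped Matrix

lemma key {n : ℕ} (K : Matrix (Fin n) (Fin n) ℂ) (hskew : ∀ a b, K a b = -K b a) (c : ℂ)
    (h : (K + c • 1) * (K + c • 1)ᴴ = (((K + c • 1)ᴴ) * (K + c • 1)).map (starRingEnd ℂ)) :
    ∀ i j, (starRingEnd ℂ) c * K i j = c * (starRingEnd ℂ) (K i j) := by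
  intro i j
  have h' := congrFun (congrFun h i) j
  simp only [Matrix.mul_apply, Matrix.map_apply, Matrix.add_apply, Matrix.conjTranspose_apply,
    Matrix.smul_apply, Matrix.one_apply, smul_eq_mul, mul_one, starRingEnd_apply,
    star_add, apply_ite (star : ℂ → ℂ), star_zero, star_mul', star_one, star_star, star_sum,
    star_mul, map_sum, mul_add, add_mul, Finset.sum_add_distrib, mul_ite, ite_mul, mul_zero,
    zero_mul, Finset.sum_ite_eq, Finset.sum_ite_eq', Finset.mem_univ, if_true] at h'
  rw [show (if j = i then c * star c else 0) = (if i = j then c * star c else 0) by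
        simp [eq_comm]] at h'
  rw [hskew j i] at h'
  have hsum : (∑ x, K i x * star (K j x)) = ∑ x, K x i * star (K x j) := by
    refine Finset.sum_congr rfl fun x _ => ?_
    rw [hskew i x, hskew j x]
    simp only [star_neg, star_star]
    ring
  rw [hsum] at h'
  simp only [star_neg, star_star] at h'
  simp only [starRingEnd_apply]
  linear_combination h' / 2

/-- if `X` is a subspace of the `n×n` complex matrices squeezed between the
symmetric matrices and the conjugate-normal matrices, then `X` is exactly the symmetric
matrices. -/
theorem stmt2 {n : ℕ} (X : Submodule ℂ (Matrix (Fin n) (Fin n) ℂ))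
    (hS : ∀ A : Matrix (Fin n) (Fin n) ℂ, Aᵀ = A → A ∈ X)
    (hC : ∀ A ∈ X, A * Aᴴ = (Aᴴ * A).map (starRingEnd ℂ)) :
    ∀ A : Matrix (Fin n) (Fin n) ℂ, A ∈ X ↔ Aᵀ = A := by
  intro A
  refine ⟨fun hA => ?_, hS A⟩
  set B := (2⁻¹ : ℂ) • (A + Aᵀ) with hBd
  have hBsym : Bᵀ = B := by
    ext i j
    simp [hBd, Matrix.transpose_apply, Matrix.smul_apply, Matrix.add_apply, add_comm]
  set K := A - B with hKd
  have hKX : K ∈ X := X.sub_mem hA (hS _ hBsym)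
  have hskew : ∀ a b, K a b = -K b a := by
    intro a b
    simp only [hKd, hBd, Matrix.sub_apply, Matrix.smul_apply, Matrix.add_apply,
      Matrix.transpose_apply, smul_eq_mul]
    ring
  have hone : ∀ c : ℂ, K + c • 1 ∈ X := fun c =>
    X.add_mem hKX (hS _ (by rw [Matrix.transpose_smul, Matrix.transpose_one]))
  have h1 := key K hskew 1 (hC _ (hone 1))
  have hI := key K hskew Complex.I (hC _ (hone Complex.I))
  have hK0 : K = 0 := by
    ext i j
    have e1 := h1 i j
    have e2 := hI i j
    simp only [map_one, one_mul] at e1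
    rw [Complex.conj_I, ← e1] at e2
    have h2 : (2 * Complex.I) * K i j = 0 := by linear_combination -e2
    have := mul_eq_zero.mp h2
    simp only [Matrix.zero_apply]
    rcases this with h | h
    · exact absurd h (by simp [Complex.I_ne_zero])
    · exact h
  have hAB : A = B := by rw [← sub_eq_zero]; exact hK0
  rw [hAB, hBsym]
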